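/- For any proper ideal I of C(X), the ideal I* of B₁(X) generated by I (as a subset of B₁(X)) is a proper ideal of B₁(X). -/

import Mathlib

open Filter Topology

def CFun (X : Type*) [TopologicalSpace X] : Subring (X → ℝ) where
  carrier := {f | Continuous f}
  one_mem' := continuous_const
  zero_mem' := continuous_const
  add_mem' := fun hf hg => hf.add hg
  mul_mem' := fun hf hg => hf.mul hg
  neg_mem' := fun hf => hf.neg

def B1 (X : Type*) [TopologicalSpace X] : Subring (X → ℝ) where
  carrier := {f | ∃ u : ℕ → C(X, ℝ), ∀ x, Tendsto (fun n => u n x) atTop (𝓝 (f x))}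
  one_mem' := ⟨fun _ => 1, fun _ => tendsto_const_nhds⟩
  zero_mem' := ⟨fun _ => 0, fun _ => tendsto_const_nhds⟩
  add_mem' := by
    rintro f g ⟨u, hu⟩ ⟨v, hv⟩
    exact ⟨fun n => u n + v n, fun x => (hu x).add (hv x)⟩
  mul_mem' := by
    rintro f g ⟨u, hu⟩ ⟨v, hv⟩
    exact ⟨fun n => u n * v n, fun x => (hu x).mul (hv x)⟩
  neg_mem' := by
    rintro f ⟨u, hu⟩
    exact ⟨fun n => -u n, fun x => (hu x).neg⟩

theorem CFun_le_B1 (X : Type*) [TopologicalSpace X] : CFun X ≤ B1 X :=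
  fun f hf => ⟨fun _ => ⟨f, hf⟩, fun _ => tendsto_const_nhds⟩

def inclB (X : Type*) [TopologicalSpace X] : CFun X →+* B1 X :=
  Subring.inclusion (CFun_le_B1 X)

def idealB {X : Type*} [TopologicalSpace X] (I : Ideal (CFun X)) : Set (B1 X) :=
  {f | ∃ u : ℕ → CFun X, (∀ n, u n ∈ I) ∧
    ∀ x, Tendsto (fun n => (u n : X → ℝ) x) atTop (𝓝 ((f : X → ℝ) x))}

def IsRealMax {X : Type*} [TopologicalSpace X] (M : Ideal (CFun X)) : Prop :=
  M.IsMaximal ∧ Nonempty ((CFun X ⧸ M) ≃+* ℝ)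

def IsRealMaxB {X : Type*} [TopologicalSpace X] (M : Ideal (B1 X)) : Prop :=
  M.IsMaximal ∧ Nonempty ((B1 X ⧸ M) ≃+* ℝ)

def evalC {X : Type*} [TopologicalSpace X] (p : X) : CFun X →+* ℝ :=
  (Pi.evalRingHom (fun _ => ℝ) p).comp (CFun X).subtype

def evalB {X : Type*} [TopologicalSpace X] (p : X) : B1 X →+* ℝ :=
  (Pi.evalRingHom (fun _ => ℝ) p).comp (B1 X).subtype

def constB1 {X : Type*} [TopologicalSpace X] (r : ℝ) : B1 X :=
  ⟨fun _ => r, ⟨fun _ => ContinuousMap.const X r, fun _ => tendsto_const_nhds⟩⟩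

theorem span_of_proper_is_proper {X : Type*} [TopologicalSpace X]
    (I : Ideal (CFun X)) (hI : I ≠ ⊤) :
    Ideal.span (inclB X '' (↑I : Set (CFun X))) ≠ (⊤ : Ideal (B1 X)) := by
  intro h
  have h1 : (1 : B1 X) ∈ Ideal.span (inclB X '' (↑I : Set (CFun X))) := by
    rw [h]; exact Submodule.mem_top
  obtain ⟨n, a, f, hsum⟩ := Submodule.mem_span_set'.mp h1
  choose u hu hfu using fun i => (f i).2
  set G : CFun X := ∑ i, u i * u i with hG
  have hGI : G ∈ I := Ideal.sum_mem I fun i _ => I.mul_mem_left (u i) (hu i)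
  have hGx : ∀ x, (G : X → ℝ) x ≠ 0 := by
    intro x hx
    have h1x : (1 : ℝ) = ∑ i, ((a i : X → ℝ) x) * ((u i : X → ℝ) x) := by
      have := congrArg (evalB x) hsum
      simp only [map_sum, map_one, smul_eq_mul, map_mul] at this
      rw [← this]
      congr 1; funext i
      have : ((f i : B1 X) : X → ℝ) = ((u i : X → ℝ)) := by
        rw [← hfu i]; rfl
      simp [evalB, this]
    have hGsum : (G : X → ℝ) x = ∑ i, ((u i : X → ℝ) x) ^ 2 := by
      rw [hG]
      have : ((∑ i, u i * u i : CFun X) : X → ℝ) x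
          = ∑ i, ((u i : X → ℝ) x) * ((u i : X → ℝ) x) := by
        have := congrArg (evalC x) (rfl : (∑ i, u i * u i : CFun X) = ∑ i, u i * u i)
        simpa [evalC, map_sum, map_mul] using this
      rw [this]; exact Finset.sum_congr rfl fun i _ => (sq _).symm
    have hzero : ∀ i ∈ Finset.univ, ((u i : X → ℝ) x) ^ 2 = 0 := by
      intro i _
      have hnn : ∀ j ∈ (Finset.univ : Finset (Fin n)), 0 ≤ ((u j : X → ℝ) x) ^ 2 :=
        fun j _ => sq_nonneg _
      have := (Finset.sum_eq_zero_iff_of_nonneg hnn).mp (by rw [← hGsum]; exact hx)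
      exact this i (Finset.mem_univ i)
    have : (1 : ℝ) = 0 := by
      rw [h1x]
      refine Finset.sum_eq_zero fun i _ => ?_
      have : (u i : X → ℝ) x = 0 := pow_eq_zero_iff (two_ne_zero) |>.mp (hzero i (Finset.mem_univ i))
      rw [this, mul_zero]
    exact one_ne_zero this
  have hGc : Continuous (G : X → ℝ) := G.2
  set Ginv : CFun X := ⟨fun x => ((G : X → ℝ) x)⁻¹, hGc.inv₀ hGx⟩ with hGinv
  have hmul : G * Ginv = 1 := by
    apply Subtype.ext
    funext x
    exact mul_inv_cancel₀ (hGx x)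
  have : IsUnit G := IsUnit.of_mul_eq_one _ hmul
  exact hI (I.eq_top_of_isUnit_mem hGI this)
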